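/- Let A be a symmetric positive definite n×n real matrix and X any n×n real matrix, and define 𝓛_A(X) := ∫₀^∞ exp(−τA) X exp(−τA) dτ. Then A·𝓛_A(X) + 𝓛_A(X)·A = X; that is, 𝓛_A inverts the Sylvester operator X ↦ A X + X A. -/

import Mathlib

open Matrix MeasureTheory

attribute [local instance] Matrix.linftyOpNormedAddCommGroup Matrix.linftyOpNormedSpace

/-- The Bochner integral `∫₀^∞ exp(-τA) X exp(-τA) dτ` of matrix-valued functions. -/
noncomputable def lyapInt {n : ℕ} (A X : Matrix (Fin n) (Fin n) ℝ) : Matrix (Fin n) (Fin n) ℝ :=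
  ∫ τ in Set.Ioi (0 : ℝ), NormedSpace.exp (-(τ • A)) * X * NormedSpace.exp (-(τ • A))

section Aux

variable {n : ℕ}

local notation "M" => Matrix (Fin n) (Fin n) ℝ

/-- Derivative of `τ ↦ exp(-τA)`. -/
lemma lyap_hasDerivAt_exp (A : M) (τ : ℝ) :
    HasDerivAt (fun t : ℝ => NormedSpace.exp (-(t • A)))
      (-(A * NormedSpace.exp (-(τ • A)))) τ := by
  letI : SeminormedRing M := Matrix.linftyOpSemiNormedRing
  letI : NormedRing M := Matrix.linftyOpNormedRing
  letI : NormedAlgebra ℝ M := Matrix.linftyOpNormedAlgebra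
  have h := hasDerivAt_exp_smul_const (𝕂 := ℝ) (-A) τ
  simp only [smul_neg] at h
  have hc : Commute A (-(τ • A)) := ((Commute.refl A).smul_right τ).neg_right
  have h2 : NormedSpace.exp (-(τ • A)) * (-A) = -(A * NormedSpace.exp (-(τ • A))) := by
    rw [mul_neg, (hc.exp_right).eq]
  exact h.congr_deriv h2

/-- Derivative of the integrand. -/
lemma lyap_hasDerivAt_f (A X : M) (τ : ℝ) :
    HasDerivAt (fun t : ℝ =>
        NormedSpace.exp (-(t • A)) * X * NormedSpace.exp (-(t • A)))
      (-(A * (NormedSpace.exp (-(τ • A)) * X * NormedSpace.exp (-(τ • A)))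
          + (NormedSpace.exp (-(τ • A)) * X * NormedSpace.exp (-(τ • A))) * A)) τ := by
  letI : SeminormedRing M := Matrix.linftyOpSemiNormedRing
  letI : NormedRing M := Matrix.linftyOpNormedRing
  letI : NormedAlgebra ℝ M := Matrix.linftyOpNormedAlgebra
  set g : ℝ → M := fun t => NormedSpace.exp (-(t • A)) with hg
  have hgA : A * g τ = g τ * A := by
    have hc : Commute A (-(τ • A)) := ((Commute.refl A).smul_right τ).neg_right
    exact (hc.exp_right).eq
  have h1 : HasDerivAt g (-(A * g τ)) τ := lyap_hasDerivAt_exp A τ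
  have h2 : HasDerivAt (fun t => g t * X) (-(A * g τ) * X) τ := h1.mul_const X
  have h3 := h2.mul h1
  refine h3.congr_deriv ?_
  show _ = -(A * (g τ * X * g τ) + (g τ * X * g τ) * A)
  have : g τ * X * -(A * g τ) = -((g τ * X * g τ) * A) := by
    rw [hgA]
    simp only [mul_neg, neg_mul]
    rw [mul_assoc (g τ * X), ← mul_assoc]
  rw [this]
  simp only [neg_mul, mul_assoc, neg_add]

/-- Exponential decay of `‖exp(-τA)‖` for `A` positive definite. -/
lemma lyap_norm_exp_le (A : M) (hA : A.PosDef) :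
    ∃ C : ℝ, 0 ≤ C ∧ ∃ l : ℝ, 0 < l ∧ ∀ τ : ℝ, 0 ≤ τ →
      ‖NormedSpace.exp (-(τ • A))‖ ≤ C * Real.exp (-(l * τ)) := by
  rcases Nat.eq_zero_or_pos n with h0 | hn
  · refine ⟨0, le_rfl, 1, one_pos, fun τ hτ => ?_⟩
    subst h0
    have : (NormedSpace.exp (-(τ • A))) = 0 := Subsingleton.elim _ _
    simp [this]
  · haveI : NeZero n := ⟨hn.ne'⟩
    have hH : A.IsHermitian := hA.1
    set U : M := (hH.eigenvectorUnitary : M) with hU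
    set d : Fin n → ℝ := hH.eigenvalues with hd
    have hdpos : ∀ i, 0 < d i := hA.eigenvalues_pos
    obtain ⟨i0, _, hi0⟩ := Finset.exists_min_image Finset.univ d ⟨0, Finset.mem_univ 0⟩
    refine ⟨‖U‖ * ‖star U‖, by positivity, d i0, hdpos i0, fun τ hτ => ?_⟩
    have hUU : U * star U = 1 := Matrix.mem_unitaryGroup_iff.mp hH.eigenvectorUnitary.2
    have hUU' : star U * U = 1 := Matrix.mem_unitaryGroup_iff'.mp hH.eigenvectorUnitary.2
    have hUinv : U⁻¹ = star U := Matrix.inv_eq_right_inv hUU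
    have hunit : IsUnit U := ⟨⟨U, star U, hUU, hUU'⟩, rfl⟩
    have hspec : A = U * Matrix.diagonal d * star U := by
      have := hH.spectral_theorem
      simpa [RCLike.ofReal_real_eq_id] using this
    have hdneg : Matrix.diagonal (fun i => -(τ * d i)) = -(τ • Matrix.diagonal d) := by
      ext i j
      rcases eq_or_ne i j with rfl | hij
      · simp
      · simp [Matrix.diagonal_apply_ne _ hij]
    have hconj : -(τ • A) = U * Matrix.diagonal (fun i => -(τ * d i)) * U⁻¹ := by
      rw [hUinv, hspec, hdneg]
      simp only [mul_neg, neg_mul, mul_smul_comm, smul_mul_assoc]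
    have hexp : NormedSpace.exp (-(τ • A))
        = U * Matrix.diagonal (fun i => Real.exp (-(τ * d i))) * star U := by
      rw [hconj, Matrix.exp_conj U _ hunit, hUinv,
        Matrix.exp_diagonal, Pi.exp_def]
      simp [Real.exp_eq_exp_ℝ]
    have hdiag : ‖Matrix.diagonal (fun i => Real.exp (-(τ * d i)))‖
        ≤ Real.exp (-(d i0 * τ)) := by
      rw [Matrix.linfty_opNorm_diagonal]
      refine (pi_norm_le_iff_of_nonneg (Real.exp_nonneg _)).2 fun i => ?_
      rw [Real.norm_eq_abs, abs_of_pos (Real.exp_pos _)]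
      apply Real.exp_le_exp.2
      have := hi0 i (Finset.mem_univ i)
      nlinarith
    calc ‖NormedSpace.exp (-(τ • A))‖
        ≤ ‖U * Matrix.diagonal (fun i => Real.exp (-(τ * d i)))‖ * ‖star U‖ := by
          rw [hexp]; exact Matrix.linfty_opNorm_mul _ _
      _ ≤ ‖U‖ * ‖Matrix.diagonal (fun i => Real.exp (-(τ * d i)))‖ * ‖star U‖ := by
          gcongr
          exact Matrix.linfty_opNorm_mul _ _
      _ ≤ ‖U‖ * Real.exp (-(d i0 * τ)) * ‖star U‖ := by gcongr
      _ = ‖U‖ * ‖star U‖ * Real.exp (-(d i0 * τ)) := by ring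

end Aux

/-- For `A` symmetric positive definite, `𝓛_A(X) = ∫₀^∞ exp(-τA) X exp(-τA) dτ` inverts the
Sylvester operator: `A 𝓛_A(X) + 𝓛_A(X) A = X`. -/
theorem lyapInt_solves_sylvester {n : ℕ} (A X : Matrix (Fin n) (Fin n) ℝ) (hA : A.PosDef) :
    A * lyapInt A X + lyapInt A X * A = X := by
  set g : ℝ → Matrix (Fin n) (Fin n) ℝ := fun τ => NormedSpace.exp (-(τ • A)) with hgdef
  set f : ℝ → Matrix (Fin n) (Fin n) ℝ := fun τ => g τ * X * g τ with hfdef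
  obtain ⟨C, hC, l, hl, hbound⟩ := lyap_norm_exp_le A hA
  letI : ContinuousENorm (Matrix (Fin n) (Fin n) ℝ) := SeminormedAddGroup.toContinuousENorm
  haveI : TopologicalSpace.PseudoMetrizableSpace (Matrix (Fin n) (Fin n) ℝ) :=
    PseudoEMetricSpace.pseudoMetrizableSpace
  have hderiv : ∀ τ : ℝ, HasDerivAt f (-(A * f τ + f τ * A)) τ := fun τ =>
    lyap_hasDerivAt_f A X τ
  have hcont : Continuous f :=
    continuous_iff_continuousAt.2 fun τ => (hderiv τ).continuousAt
  -- integrability of f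
  have hfint : IntegrableOn f (Set.Ioi (0 : ℝ)) := by
    refine Integrable.mono'
      ((exp_neg_integrableOn_Ioi 0 (by positivity : (0:ℝ) < 2 * l)).const_mul (C * C * ‖X‖))
      hcont.aestronglyMeasurable.restrict ?_
    filter_upwards [ae_restrict_mem measurableSet_Ioi] with τ hτ
    have hτ0 : (0:ℝ) ≤ τ := le_of_lt hτ
    have hb := hbound τ hτ0
    have h1 : ‖f τ‖ ≤ ‖g τ‖ * ‖X‖ * ‖g τ‖ := by
      calc ‖g τ * X * g τ‖ ≤ ‖g τ * X‖ * ‖g τ‖ := Matrix.linfty_opNorm_mul _ _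
        _ ≤ ‖g τ‖ * ‖X‖ * ‖g τ‖ := by
            gcongr
            exact Matrix.linfty_opNorm_mul _ _
    have hgn : (0:ℝ) ≤ ‖g τ‖ := norm_nonneg _
    have hCe : 0 ≤ C * Real.exp (-(l * τ)) := mul_nonneg hC (Real.exp_nonneg _)
    have h2 : ‖g τ‖ * ‖X‖ * ‖g τ‖ ≤ (C * Real.exp (-(l * τ))) * ‖X‖ * (C * Real.exp (-(l * τ))) :=
      mul_le_mul (mul_le_mul_of_nonneg_right hb (norm_nonneg X)) hb (norm_nonneg _)
        (mul_nonneg hCe (norm_nonneg X))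
    have h3 : (C * Real.exp (-(l * τ))) * ‖X‖ * (C * Real.exp (-(l * τ)))
        = C * C * ‖X‖ * Real.exp (-(2 * l) * τ) := by
      rw [show (-(2*l) * τ) = (-(l*τ)) + (-(l*τ)) by ring, Real.exp_add]
      ring
    calc ‖f τ‖ ≤ ‖g τ‖ * ‖X‖ * ‖g τ‖ := h1
      _ ≤ _ := h2
      _ = _ := h3
  -- tendsto 0 at infinity
  have htend : Filter.Tendsto f Filter.atTop (nhds 0) := by
    have hexp : Filter.Tendsto (fun τ : ℝ => Real.exp (-(l * τ))) Filter.atTop (nhds 0) := by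
      have hlt : Filter.Tendsto (fun τ : ℝ => l * τ) Filter.atTop Filter.atTop :=
        Filter.Tendsto.const_mul_atTop hl Filter.tendsto_id
      exact Real.tendsto_exp_neg_atTop_nhds_zero.comp hlt
    have ha : Filter.Tendsto
        (fun τ => (C * Real.exp (-(l * τ))) * ‖X‖ * (C * Real.exp (-(l * τ))))
        Filter.atTop (nhds 0) := by
      have h := ((hexp.const_mul C).mul_const ‖X‖).mul (hexp.const_mul C)
      simpa using h
    refine squeeze_zero_norm' ?_ ha
    filter_upwards [Filter.eventually_ge_atTop (0:ℝ)] with τ hτ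
    have hb := hbound τ hτ
    have h1 : ‖f τ‖ ≤ ‖g τ‖ * ‖X‖ * ‖g τ‖ := by
      calc ‖g τ * X * g τ‖ ≤ ‖g τ * X‖ * ‖g τ‖ := Matrix.linfty_opNorm_mul _ _
        _ ≤ ‖g τ‖ * ‖X‖ * ‖g τ‖ := by
            gcongr
            exact Matrix.linfty_opNorm_mul _ _
    have hCe : 0 ≤ C * Real.exp (-(l * τ)) := mul_nonneg hC (Real.exp_nonneg _)
    exact h1.trans (mul_le_mul (mul_le_mul_of_nonneg_right hb (norm_nonneg X)) hb
      (norm_nonneg _) (mul_nonneg hCe (norm_nonneg X)))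
  -- multiplication maps as continuous linear maps
  let L₁ : Matrix (Fin n) (Fin n) ℝ →L[ℝ] Matrix (Fin n) (Fin n) ℝ :=
    LinearMap.toContinuousLinearMap (LinearMap.mulLeft ℝ A)
  let L₂ : Matrix (Fin n) (Fin n) ℝ →L[ℝ] Matrix (Fin n) (Fin n) ℝ :=
    LinearMap.toContinuousLinearMap (LinearMap.mulRight ℝ A)
  have hint1 : IntegrableOn (fun τ => A * f τ) (Set.Ioi (0:ℝ)) := by
    have := L₁.integrable_comp hfint
    exact this
  have hint2 : IntegrableOn (fun τ => f τ * A) (Set.Ioi (0:ℝ)) := by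
    have := L₂.integrable_comp hfint
    exact this
  have hfderint : IntegrableOn (fun τ => -(A * f τ + f τ * A)) (Set.Ioi (0:ℝ)) :=
    (hint1.add hint2).neg
  have hf0 : f 0 = X := by
    simp [hfdef, hgdef, NormedSpace.exp_zero]
  have hFTC : (∫ τ in Set.Ioi (0:ℝ), -(A * f τ + f τ * A)) = 0 - f 0 :=
    integral_Ioi_of_hasDerivAt_of_tendsto
      (hcont.continuousAt.continuousWithinAt)
      (fun τ _ => hderiv τ) hfderint htend
  have hL : lyapInt A X = ∫ τ in Set.Ioi (0:ℝ), f τ := rfl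
  have hsplit : (∫ τ in Set.Ioi (0:ℝ), -(A * f τ + f τ * A))
      = -(A * lyapInt A X + lyapInt A X * A) := by
    rw [integral_neg, integral_add hint1 hint2]
    congr 1
    congr 1
    · have := L₁.integral_comp_comm hfint
      exact this
    · have := L₂.integral_comp_comm hfint
      exact this
  rw [hsplit, hf0, zero_sub] at hFTC
  exact neg_injective hFTC
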